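/- Let λ_D > λ_N > 0, τ > 0, α > 0 be real numbers. Define g(s) = ((1 − λ_D/λ_N) s² − τα/λ_N)/(λ_D s² + 2 λ_N s + λ_N + τα) for s ≥ 0. Then g attains its supremum over ℝ at s₂ = τα/(λ_D − λ_N), and g(s₂) = − τα(λ_D − λ_N)/(λ_N (τα λ_D + λ_N(λ_D − λ_N))). -/

import Mathlib

/-- For `λ_D > λ_N > 0`, `τ > 0`, `α > 0`, the function
`g(s) = ((1 − λ_D/λ_N) s² − τα/λ_N)/(λ_D s² + 2 λ_N s + λ_N + τα)`
attains its supremum over `ℝ` at `s₂ = τα/(λ_D − λ_N)`, with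
`g(s₂) = − τα(λ_D − λ_N)/(λ_N (τα λ_D + λ_N(λ_D − λ_N)))`. -/
theorem sup_robin_neumann (lamD lamN τ α : ℝ) (hN : 0 < lamN) (hDN : lamN < lamD)
    (hτ : 0 < τ) (hα : 0 < α)
    (g : ℝ → ℝ)
    (hg : ∀ s, g s = ((1 - lamD / lamN) * s ^ 2 - τ * α / lamN) /
        (lamD * s ^ 2 + 2 * lamN * s + lamN + τ * α))
    (s₂ : ℝ) (hs₂ : s₂ = τ * α / (lamD - lamN)) :
    IsGreatest (Set.range g) (g s₂) ∧
      g s₂ = -(τ * α * (lamD - lamN)) /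
        (lamN * (τ * α * lamD + lamN * (lamD - lamN))) := by
  have ht : 0 < τ * α := mul_pos hτ hα
  have hd : 0 < lamD - lamN := by linarith
  have hden : ∀ s : ℝ, 0 < lamD * s ^ 2 + 2 * lamN * s + lamN + τ * α := by
    intro s
    nlinarith [sq_nonneg (lamD * s + lamN), mul_pos hN (sub_pos.mpr hDN)]
  have hVden : 0 < lamN * (τ * α * lamD + lamN * (lamD - lamN)) := by
    have h1 : 0 < τ * α * lamD := mul_pos ht (hN.trans hDN)
    have h2 : 0 < lamN * (lamD - lamN) := mul_pos hN hd
    nlinarith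
  -- rewrite g s with denominator cleared of inner divisions
  have hg' : ∀ s : ℝ, g s = ((lamN - lamD) * s ^ 2 - τ * α) /
      (lamN * (lamD * s ^ 2 + 2 * lamN * s + lamN + τ * α)) := by
    intro s
    rw [hg s]
    rw [div_eq_div_iff (ne_of_gt (hden s)) (ne_of_gt (mul_pos hN (hden s)))]
    field_simp
  have hval : g s₂ = -(τ * α * (lamD - lamN)) /
      (lamN * (τ * α * lamD + lamN * (lamD - lamN))) := by
    rw [hg' s₂, hs₂]
    rw [div_eq_div_iff (ne_of_gt (mul_pos hN (hden _))) (ne_of_gt hVden)]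
    field_simp
    ring
  refine ⟨⟨⟨s₂, rfl⟩, ?_⟩, hval⟩
  rintro x ⟨s, rfl⟩
  rw [hg' s, hval]
  rw [div_le_div_iff₀ (mul_pos hN (hden s)) hVden]
  nlinarith [mul_nonneg (mul_nonneg hN.le hN.le)
    (sq_nonneg ((lamD - lamN) * s - τ * α))]
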